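/- Let f* : [0,1]^{d_in} → A with ‖f*‖_{H¹([0,1]^{d_in}; ℝ^{d_out})} < ∞, where A = ℝ^{d_out} or A = ∏_{i=1}^{d_out}[a_i, b_i] is a cube. Then there exist constants c, C > 0, depending only on d_in, d_out, and ‖f*‖_{H¹([0,1]^{d_in}; ℝ^{d_out})}, such that for every M ∈ ℕ there is a feedforward ReLU network f_NN ∈ F_NN(d_in, d_out, L, W) with L ≤ c(1 + log M) and W ≤ c·M satisfying ‖f* − f_NN‖_{L^∞([0,1]^{d_in}; ℝ^{d_out})} ≤ C·M^{−1/d_in}, and moreover the range of f_NN is contained in A. -/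

import Mathlib

noncomputable section

open Real Set

/-- `ℝ^n` with the Euclidean norm. -/
abbrev Euc (n : ℕ) : Type := EuclideanSpace ℝ (Fin n)

/-- An affine layer `x ↦ A x + b`. -/
def affineLayer {n m : ℕ} (A : Matrix (Fin m) (Fin n) ℝ) (b : Euc m) : Euc n → Euc m :=
  fun x => WithLp.toLp 2 fun i => (∑ j, A i j * x j) + b i

/-- Coordinatewise ReLU. -/
def reluV {n : ℕ} (x : Euc n) : Euc n := WithLp.toLp 2 fun i => max (x i) 0

/-- `IsFNNExact L din dout W f` : `f` is realized by a feedforward ReLU network with exactly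
`L` hidden layers, input dimension `din`, output dimension `dout`, all hidden widths `≤ W`. -/
def IsFNNExact : (L : ℕ) → (din dout W : ℕ) → (Euc din → Euc dout) → Prop
  | 0, din, dout, _, f =>
      ∃ (A : Matrix (Fin dout) (Fin din) ℝ) (b : Euc dout), f = affineLayer A b
  | L + 1, din, dout, W, f =>
      ∃ m : ℕ, m ≤ W ∧
        ∃ (A : Matrix (Fin m) (Fin din) ℝ) (b : Euc m) (g : Euc m → Euc dout),
          IsFNNExact L m dout W g ∧ f = g ∘ reluV ∘ affineLayer A b

/-- The class `F_NN(din, dout, L, W)`: depth at most `L`, width at most `W`. -/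
def MemFNN (din dout L W : ℕ) (f : Euc din → Euc dout) : Prop :=
  ∃ L' ≤ L, IsFNNExact L' din dout W f

/-- Membership in `F_NN(din, dout, L, W)` with real-valued size bounds. -/
def MemFNNR (din dout : ℕ) (L W : ℝ) (f : Euc din → Euc dout) : Prop :=
  ∃ L' W' : ℕ, (L' : ℝ) ≤ L ∧ (W' : ℝ) ≤ W ∧ IsFNNExact L' din dout W' f

/-- The latent cube `Z([a,b]) = [0,1]^d × [a,b] ⊆ ℝ^{d+1}`. -/
def Zcube (d : ℕ) (a b : ℝ) : Set (Euc (d + 1)) :=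
  {z | (∀ i : Fin d, z i.castSucc ∈ Icc (0 : ℝ) 1) ∧ z (Fin.last d) ∈ Icc a b}

/-- Reach of a subset of Euclidean space. -/
def reach {n : ℕ} (M : Set (Euc n)) : ℝ :=
  sInf {r : ℝ | 0 < r ∧ ∃ x ∈ M, ∃ y ∈ M, x ≠ y ∧ ∃ v : Euc n,
    r = ‖x - v‖ ∧ r = ‖y - v‖ ∧ r = Metric.infDist v M}

/-- The states at time `t`: `M(t) = F(M(0), t)`. -/
def Mt {D : ℕ} (F : Euc D → ℝ → Euc D) (M0 : Set (Euc D)) (t : ℝ) : Set (Euc D) :=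
  (fun x => F x t) '' M0

/-- `M([a,b]) = ⋃_{t ∈ [a,b]} M(t)`. -/
def Mab {D : ℕ} (F : Euc D → ℝ → Euc D) (M0 : Set (Euc D)) (a b : ℝ) : Set (Euc D) :=
  ⋃ t ∈ Icc a b, Mt F M0 t

/-- The windowed composition `(T^{i} ∘ (P^{i})^{∘𝐓_i}) ∘ ⋯ ∘ (T^{1} ∘ (P^{1})^{∘𝐓_1})`
(0-indexed), where `𝐓_j = κ(j+1) − κ(j)`. -/
def weldChain {α : Type*} (P Tc : ℕ → α → α) (κ : ℕ → ℕ) : ℕ → α → α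
  | 0 => id
  | j + 1 => (Tc j) ∘ (P j)^[κ (j + 1) - κ j] ∘ weldChain P Tc κ j

/-- The unit cube `[0,1]^d ⊆ ℝ^d`. -/
def unitCube (d : ℕ) : Set (Euc d) := {x | ∀ i, x i ∈ Icc (0 : ℝ) 1}

-- Toolkit part 1
lemma affine_comp {n m e : ℕ} (A' : Matrix (Fin e) (Fin m) ℝ) (b' : Euc e)
    (A : Matrix (Fin m) (Fin n) ℝ) (b : Euc m) :
    affineLayer A' b' ∘ affineLayer A b =
      affineLayer (A' * A) (WithLp.toLp 2 fun i => (∑ j, A' i j * b j) + b' i) := by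
  funext x; ext i
  simp only [Function.comp_apply, affineLayer, Matrix.mul_apply, mul_add, Finset.mul_sum,
    Finset.sum_add_distrib, Finset.sum_mul, add_assoc]
  congr 1
  rw [Finset.sum_comm]
  congr 1; funext j; congr 1; funext k; ring

lemma IsFNNExact.preAffine {L m e W : ℕ} {g : Euc m → Euc e}
    (hg : IsFNNExact L m e W g) {n : ℕ} (A : Matrix (Fin m) (Fin n) ℝ) (b : Euc m) :
    IsFNNExact L n e W (g ∘ affineLayer A b) := by
  induction L generalizing m n g A b with
  | zero =>
    obtain ⟨A', b', rfl⟩ := hg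
    exact ⟨A' * A, WithLp.toLp 2 fun i => (∑ j, A' i j * b j) + b' i, (affine_comp A' b' A b)⟩
  | succ L ih =>
    obtain ⟨m1, hm1, A1, b1, g1, hg1, rfl⟩ := hg
    refine ⟨m1, hm1, ?_⟩
    obtain ⟨A'', b'', h''⟩ : ∃ A'' b'', affineLayer A1 b1 ∘ affineLayer A b = affineLayer A'' b'' :=
      ⟨_, _, affine_comp A1 b1 A b⟩
    exact ⟨A'', b'', g1, hg1, by rw [← h'']; rfl⟩

lemma IsFNNExact.mono {L d e W W' : ℕ} (hW : W ≤ W') {f : Euc d → Euc e}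
    (hf : IsFNNExact L d e W f) : IsFNNExact L d e W' f := by
  induction L generalizing d f with
  | zero => exact hf
  | succ L ih =>
    obtain ⟨m, hm, A, b, g, hg, rfl⟩ := hf
    exact ⟨m, hm.trans hW, A, b, g, ih hg, rfl⟩

lemma IsFNNExact.comp {L1 L2 d m e W : ℕ} {f : Euc d → Euc m} {g : Euc m → Euc e}
    (hf : IsFNNExact L1 d m W f) (hg : IsFNNExact L2 m e W g) :
    IsFNNExact (L1 + L2) d e W (g ∘ f) := by
  induction L1 generalizing d f with
  | zero =>
    obtain ⟨A, b, rfl⟩ := hf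
    simpa using hg.preAffine A b
  | succ L1 ih =>
    obtain ⟨m1, hm1, A, b, f1, hf1, rfl⟩ := hf
    have : L1 + 1 + L2 = (L1 + L2) + 1 := by omega
    rw [this]
    exact ⟨m1, hm1, A, b, g ∘ f1, ih hf1, rfl⟩

lemma onehidden_ix {ι : Type} [Fintype ι] {n e : ℕ} (w : ι → Fin n → ℝ) (β : ι → ℝ)
    (u : Fin e → ι → ℝ) (γ : Fin e → ℝ) :
    IsFNNExact 1 n e (Fintype.card ι)
      (fun x => WithLp.toLp 2 fun o => (∑ j : ι, u o j * max ((∑ i, w j i * x i) + β j) 0) + γ o) := by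
  classical
  let ee := Fintype.equivFin ι
  refine ⟨Fintype.card ι, le_rfl, fun j i => w (ee.symm j) i, WithLp.toLp 2 fun j => β (ee.symm j),
    affineLayer (fun o j => u o (ee.symm j)) (WithLp.toLp 2 γ), ⟨_, _, rfl⟩, ?_⟩
  funext x; ext o
  simp only [Function.comp_apply, affineLayer, reluV]
  congr 1
  exact (Equiv.sum_comp ee.symm fun j => u o j * max ((∑ i, w j i * x i) + β j) 0).symm
-- Toolkit part 2: group max tree
def Dm (g : ℕ) : ℕ → ℕ
  | 0 => g
  | k + 1 => Dm g k + Dm g k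

def halve (n : ℕ) : Euc (n + n) → Euc n :=
  fun v => WithLp.toLp 2 fun i => max (v (Fin.castAdd n i)) (v (Fin.natAdd n i))

def gmax (g : ℕ) : (k : ℕ) → Euc (Dm g k) → Euc g
  | 0 => id
  | k + 1 => fun v => gmax g k (halve (Dm g k) v)

def fold (n : ℕ) (j : Fin (n + n)) : Fin n :=
  if h : (j : ℕ) < n then ⟨j, h⟩ else ⟨(j : ℕ) - n, by omega⟩

def leafGrp (g : ℕ) : (k : ℕ) → Fin (Dm g k) → Fin g
  | 0 => id
  | k + 1 => fun j => leafGrp g k (fold (Dm g k) j)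

def leafNum (g : ℕ) : (k : ℕ) → Fin (Dm g k) → ℕ
  | 0 => fun _ => 0
  | k + 1 => fun j => leafNum g k (fold (Dm g k) j) + (if (j : ℕ) < Dm g k then 0 else 2 ^ k)

lemma fold_castAdd (n : ℕ) (i : Fin n) : fold n (Fin.castAdd n i) = i := by
  simp [fold, Fin.ext_iff]

lemma fold_natAdd (n : ℕ) (i : Fin n) : fold n (Fin.natAdd n i) = i := by
  have : ¬ ((Fin.natAdd n i : Fin (n+n)) : ℕ) < n := by simp
  simp [fold, this, Fin.ext_iff]

lemma max_relu_identity (a b : ℝ) :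
    max (a - b) 0 + (max b 0 - max (-b) 0) = max a b := by
  have hb : max b 0 - max (-b) 0 = b := by
    rcases le_total 0 b with h | h
    · simp [max_eq_left h, max_eq_right (neg_nonpos.2 h)]
    · simp [max_eq_right h, max_eq_left (neg_nonneg.2 h)]
  rw [hb]
  rcases le_total a b with h | h
  · rw [max_eq_right (sub_nonpos.2 h), max_eq_right h, zero_add]
  · rw [max_eq_left (sub_nonneg.2 h), max_eq_left h]; ring

lemma sum_delta2 {n : ℕ} (a b : Fin n) (c d : ℝ) (v : Fin n → ℝ) :
    (∑ x, ((if x = a then c else 0) + (if x = b then d else 0)) * v x) = c * v a + d * v b := by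
  simp [add_mul, Finset.sum_add_distrib, ite_mul, Finset.sum_ite_eq']

lemma halveNet (n : ℕ) : IsFNNExact 1 (n + n) n (3 * n) (halve n) := by
  classical
  have h := onehidden_ix (ι := Fin n × Fin 3) (n := n + n) (e := n)
    (w := fun jt col =>
      (if col = Fin.castAdd n jt.1 then (if jt.2 = 0 then (1:ℝ) else 0) else 0)
      + (if col = Fin.natAdd n jt.1 then (if jt.2 = 0 then (-1:ℝ) else if jt.2 = 1 then 1 else -1) else 0))
    (β := fun _ => 0)
    (u := fun o jt => if jt.1 = o then (if jt.2 = 2 then (-1:ℝ) else 1) else 0)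
    (γ := fun _ => 0)
  have hcard : Fintype.card (Fin n × Fin 3) = 3 * n := by simp [Fintype.card_prod]; ring
  rw [hcard] at h
  convert h using 1
  funext v; ext o
  dsimp only
  rw [Fintype.sum_prod_type]
  simp only [sum_delta2, add_zero]
  simp only [Fin.sum_univ_three]
  simp only [show ((0:Fin 3) = 2) = False by decide, show ((1:Fin 3) = 2) = False by decide,
    show ((2:Fin 3) = 2) = True by decide, show ((0:Fin 3) = 0) = True by decide,
    show ((1:Fin 3) = 0) = False by decide, show ((2:Fin 3) = 0) = False by decide,
    show ((1:Fin 3) = 1) = True by decide, show ((2:Fin 3) = 1) = False by decide,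
    if_true, if_false]
  simp only [ite_mul, zero_mul, Finset.sum_add_distrib, Finset.sum_ite_eq', Finset.mem_univ, if_true, one_mul, neg_one_mul]
  rw [halve]
  dsimp only
  rw [← max_relu_identity (v (Fin.castAdd n o)) (v (Fin.natAdd n o))]
  ring
-- Toolkit part 3: gmax net and properties
lemma Dm_le_succ (g k : ℕ) : Dm g k ≤ Dm g (k + 1) := by
  simp [Dm]

lemma gmaxNet (g : ℕ) : ∀ k, IsFNNExact k (Dm g k) g (3 * Dm g k) (gmax g k)
  | 0 => by
    show IsFNNExact 0 g g (3 * g) (gmax g 0)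
    refine ⟨fun o j => if j = o then 1 else 0, 0, ?_⟩
    funext v; ext o
    simp [affineLayer, gmax, ite_mul, Finset.sum_ite_eq']
  | k + 1 => by
    have h1 : IsFNNExact 1 (Dm g k + Dm g k) (Dm g k) (3 * Dm g (k+1)) (halve (Dm g k)) :=
      (halveNet (Dm g k)).mono (by have := Dm_le_succ g k; omega)
    have h2 : IsFNNExact k (Dm g k) g (3 * Dm g (k+1)) (gmax g k) :=
      (gmaxNet g k).mono (by have := Dm_le_succ g k; omega)
    have := h1.comp h2
    rw [Nat.add_comm 1 k] at this
    exact this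

lemma gmax_ge (g : ℕ) : ∀ k (v : Euc (Dm g k)) (j : Fin (Dm g k)),
    v j ≤ gmax g k v (leafGrp g k j)
  | 0, v, j => le_refl _
  | k + 1, v, j => by
    have hj2 : (j : ℕ) < Dm g k + Dm g k := j.isLt
    have step : v j ≤ halve (Dm g k) v (fold (Dm g k) j) := by
      rcases Nat.lt_or_ge (j : ℕ) (Dm g k) with h | h
      · have hf : fold (Dm g k) j = ⟨(j:ℕ), h⟩ := by simp [fold, h]
        have hc : Fin.castAdd (Dm g k) (⟨(j:ℕ), h⟩ : Fin (Dm g k)) = j := by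
          exact Fin.ext rfl
        rw [hf]
        show v j ≤ max (v (Fin.castAdd (Dm g k) ⟨(j:ℕ), h⟩)) _
        rw [hc]; exact le_max_left _ _
      · have hf : fold (Dm g k) j = ⟨(j:ℕ) - Dm g k, by omega⟩ := by
          simp [fold, Nat.not_lt.2 h]
        have hc : Fin.natAdd (Dm g k) (⟨(j:ℕ) - Dm g k, by omega⟩ : Fin (Dm g k)) = j := by
          apply Fin.ext; show Dm g k + ((j:ℕ) - Dm g k) = (j:ℕ); omega
        rw [hf]
        show v j ≤ max _ (v (Fin.natAdd (Dm g k) ⟨(j:ℕ) - Dm g k, by omega⟩))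
        rw [hc]; exact le_max_right _ _
    calc v j ≤ halve (Dm g k) v (fold (Dm g k) j) := step
      _ ≤ gmax g k (halve (Dm g k) v) (leafGrp g k (fold (Dm g k) j)) := gmax_ge g k _ _
      _ = gmax g (k+1) v (leafGrp g (k+1) j) := rfl

lemma gmax_exists (g : ℕ) : ∀ k (v : Euc (Dm g k)) (o : Fin g),
    ∃ j, leafGrp g k j = o ∧ gmax g k v o = v j
  | 0, v, o => ⟨o, rfl, rfl⟩
  | k + 1, v, o => by
    obtain ⟨j, hj, hval⟩ := gmax_exists g k (halve (Dm g k) v) o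
    rcases le_total (v (Fin.castAdd (Dm g k) j)) (v (Fin.natAdd (Dm g k) j)) with h | h
    · refine ⟨Fin.natAdd (Dm g k) j, ?_, ?_⟩
      · show leafGrp g k (fold (Dm g k) (Fin.natAdd (Dm g k) j)) = o
        rw [fold_natAdd]; exact hj
      · show gmax g k (halve (Dm g k) v) o = _
        rw [hval]; exact max_eq_right h
    · refine ⟨Fin.castAdd (Dm g k) j, ?_, ?_⟩
      · show leafGrp g k (fold (Dm g k) (Fin.castAdd (Dm g k) j)) = o
        rw [fold_castAdd]; exact hj
      · show gmax g k (halve (Dm g k) v) o = _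
        rw [hval]; exact max_eq_left h

lemma leafNum_lt (g : ℕ) : ∀ k (j : Fin (Dm g k)), leafNum g k j < 2 ^ k
  | 0, j => by simp [leafNum]
  | k + 1, j => by
    have := leafNum_lt g k (fold (Dm g k) j)
    unfold leafNum
    split <;> simp <;> omega

lemma leaf_exists (g : ℕ) : ∀ k (o : Fin g) (t : ℕ), t < 2 ^ k →
    ∃ j : Fin (Dm g k), leafGrp g k j = o ∧ leafNum g k j = t
  | 0, o, t, ht => ⟨o, rfl, by simp [leafNum]; omega⟩
  | k + 1, o, t, ht => by
    rcases Nat.lt_or_ge t (2 ^ k) with h | h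
    · obtain ⟨j, hj, hn⟩ := leaf_exists g k o t h
      have hjlt : (j : ℕ) < Dm g (k + 1) := lt_of_lt_of_le j.isLt (Dm_le_succ g k)
      refine ⟨⟨(j : ℕ), hjlt⟩, ?_, ?_⟩
      · show leafGrp g k (fold (Dm g k) _) = o
        have : fold (Dm g k) ⟨(j:ℕ), hjlt⟩ = j := by
          simp [fold, Fin.ext_iff, j.isLt]
        erw [this]; exact hj
      · show leafNum g k (fold (Dm g k) _) + _ = t
        have hf : fold (Dm g k) ⟨(j:ℕ), hjlt⟩ = j := by
          simp [fold, Fin.ext_iff, j.isLt]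
        erw [hf, if_pos (show ((⟨(j:ℕ), hjlt⟩ : Fin (Dm g (k+1))) : ℕ) < Dm g k from j.isLt)]
        omega
    · obtain ⟨j, hj, hn⟩ := leaf_exists g k o (t - 2 ^ k) (by omega)
      have hjlt : (j : ℕ) + Dm g k < Dm g (k + 1) := by
        have := j.isLt; show _ < Dm g k + Dm g k; omega
      have hnot : ¬ ((⟨(j:ℕ) + Dm g k, hjlt⟩ : Fin (Dm g (k+1))) : ℕ) < Dm g k := by simp
      have hf : fold (Dm g k) ⟨(j:ℕ) + Dm g k, hjlt⟩ = j := by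
        simp [fold, hnot, Fin.ext_iff]
      refine ⟨⟨(j:ℕ) + Dm g k, hjlt⟩, ?_, ?_⟩
      · show leafGrp g k (fold (Dm g k) _) = o
        erw [hf]; exact hj
      · show leafNum g k (fold (Dm g k) _) + _ = t
        erw [hf, if_neg hnot]
        omega
-- Toolkit part 4: front layer and clamps
lemma sum_delta1 {n : ℕ} (a : Fin n) (c : ℝ) (v : Fin n → ℝ) :
    (∑ x, (if x = a then c else 0) * v x) = c * v a := by
  simp [ite_mul, Finset.sum_ite_eq']

lemma abs_as_relu (t : ℝ) : max t 0 + max (-t) 0 = |t| := by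
  rcases le_total 0 t with h | h
  · rw [max_eq_left h, max_eq_right (neg_nonpos.2 h), abs_of_nonneg h, add_zero]
  · rw [max_eq_right h, max_eq_left (neg_nonneg.2 h), abs_of_nonpos h, zero_add]

def frontFun {din D : ℕ} (Kc : ℝ) (pt : Fin D → Euc din) (cst : Fin D → ℝ) :
    Euc din → Euc D :=
  fun x => WithLp.toLp 2 fun j => cst j - Kc * ∑ i, |x i - pt j i|

lemma frontNet {din D : ℕ} (Kc : ℝ) (pt : Fin D → Euc din) (cst : Fin D → ℝ) :
    IsFNNExact 1 din D (D * (din * 2)) (frontFun Kc pt cst) := by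
  classical
  have h := onehidden_ix (ι := Fin D × Fin din × Fin 2) (n := din) (e := D)
    (w := fun jit col => if col = jit.2.1 then (if jit.2.2 = 0 then (1:ℝ) else -1) else 0)
    (β := fun jit => if jit.2.2 = 0 then -(pt jit.1 jit.2.1) else pt jit.1 jit.2.1)
    (u := fun o jit => if jit.1 = o then -Kc else 0)
    (γ := fun o => cst o)
  have hcard : Fintype.card (Fin D × Fin din × Fin 2) = D * (din * 2) := by
    simp [Fintype.card_prod]
  rw [hcard] at h
  convert h using 1
  funext x; ext o
  dsimp only
  rw [Fintype.sum_prod_type]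
  simp only [ite_mul, zero_mul, Finset.sum_ite_irrel, Finset.sum_const_zero,
    Finset.sum_ite_eq', Finset.mem_univ, if_true]
  rw [Fintype.sum_prod_type]
  simp only [Fin.sum_univ_two, show ((0:Fin 2) = 0) = True by decide,
    show ((1:Fin 2) = 0) = False by decide, if_true, if_false]
  simp only [sum_delta1, one_mul, neg_one_mul]
  have h1 : ∀ i : Fin din, x i + -pt o i = x i - pt o i := fun i => by ring
  have h2 : ∀ i : Fin din, -x i + pt o i = -(x i - pt o i) := fun i => by ring
  simp only [h1, h2]
  have h3 : ∀ u : ℝ, -Kc * max u 0 + -Kc * max (-u) 0 = -Kc * |u| := fun u => by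
    rw [← abs_as_relu u]; ring
  simp only [h3]
  simp only [frontFun, neg_mul, Finset.sum_neg_distrib, ← Finset.mul_sum]
  ring

def clampLowFun {e : ℕ} (a : Fin e → ℝ) : Euc e → Euc e := fun y => WithLp.toLp 2 fun i => max (y i) (a i)

def clampHighFun {e : ℕ} (b : Fin e → ℝ) : Euc e → Euc e := fun y => WithLp.toLp 2 fun i => min (y i) (b i)

lemma clampLowNet {e : ℕ} (a : Fin e → ℝ) : IsFNNExact 1 e e e (clampLowFun a) := by
  classical
  have h := onehidden_ix (ι := Fin e) (n := e) (e := e)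
    (w := fun j col => if col = j then (1:ℝ) else 0)
    (β := fun j => -(a j))
    (u := fun o j => if j = o then (1:ℝ) else 0)
    (γ := fun o => a o)
  rw [Fintype.card_fin] at h
  convert h using 1
  funext y; ext o
  simp only [sum_delta1, one_mul, ite_mul, zero_mul, Finset.sum_ite_eq', Finset.mem_univ, if_true]
  rw [clampLowFun]
  dsimp only
  rcases le_total (y o) (a o) with hc | hc
  · rw [max_eq_right hc, max_eq_right (by linarith)]; ring
  · rw [max_eq_left hc, max_eq_left (by linarith)]; ring

lemma clampHighNet {e : ℕ} (b : Fin e → ℝ) : IsFNNExact 1 e e e (clampHighFun b) := by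
  classical
  have h := onehidden_ix (ι := Fin e) (n := e) (e := e)
    (w := fun j col => if col = j then (-1:ℝ) else 0)
    (β := fun j => b j)
    (u := fun o j => if j = o then (-1:ℝ) else 0)
    (γ := fun o => b o)
  rw [Fintype.card_fin] at h
  convert h using 1
  funext y; ext o
  simp only [sum_delta1, neg_one_mul, ite_mul, zero_mul, Finset.sum_ite_eq', Finset.mem_univ,
    if_true]
  rw [clampHighFun]
  dsimp only
  rcases le_total (y o) (b o) with hc | hc
  · rw [min_eq_left hc, max_eq_left (by linarith : (0:ℝ) ≤ -y o + b o)]; ring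
  · rw [min_eq_right hc, max_eq_right (by linarith : -y o + b o ≤ (0:ℝ))]; ring
-- Part 5: norm helpers
lemma euc_abs_coord_le {n : ℕ} (u : Euc n) (i : Fin n) : |u i| ≤ ‖u‖ := by
  have h := EuclideanSpace.norm_eq u
  rw [h]
  rw [show |u i| = Real.sqrt (|u i|^2) by rw [Real.sqrt_sq_eq_abs, abs_abs]]
  apply Real.sqrt_le_sqrt
  rw [sq_abs]
  refine le_trans ?_ (Finset.single_le_sum (f := fun j => ‖u j‖ ^ 2)
    (fun j _ => by positivity) (Finset.mem_univ i))
  simp [Real.norm_eq_abs, sq_abs]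

lemma euc_norm_le_sum_abs {n : ℕ} (u : Euc n) : ‖u‖ ≤ ∑ i, |u i| := by
  rw [EuclideanSpace.norm_eq]
  have h1 : ∑ j, ‖u j‖ ^ 2 ≤ (∑ i, |u i|) ^ 2 := by
    simp only [Real.norm_eq_abs]
    exact Finset.sum_sq_le_sq_sum_of_nonneg (fun i _ => abs_nonneg _)
  calc Real.sqrt (∑ j, ‖u j‖ ^ 2) ≤ Real.sqrt ((∑ i, |u i|) ^ 2) := Real.sqrt_le_sqrt h1
    _ = abs (∑ i, |u i|) := Real.sqrt_sq_eq_abs _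
    _ = ∑ i, |u i| := abs_of_nonneg (Finset.sum_nonneg fun i _ => abs_nonneg _)

lemma euc_norm_le_card_mul {n : ℕ} (u : Euc n) (t : ℝ) (ht : ∀ i, |u i| ≤ t) :
    ‖u‖ ≤ n * t := by
  calc ‖u‖ ≤ ∑ i, |u i| := euc_norm_le_sum_abs u
    _ ≤ ∑ _i : Fin n, t := Finset.sum_le_sum fun i _ => ht i
    _ = n * t := by simp [Finset.sum_const, nsmul_eq_mul]

lemma euc_sub_apply {n : ℕ} (u v : Euc n) (i : Fin n) : (u - v) i = u i - v i := rfl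
-- Part 6: the core approximation
lemma coreApprox (din dout : ℕ) (hdin : 0 < din) (fstar : Euc din → Euc dout) (K : ℝ)
    (hK0 : 0 ≤ K)
    (hlip : ∀ x ∈ unitCube din, ∀ y ∈ unitCube din, ‖fstar x - fstar y‖ ≤ K * ‖x - y‖) (s : ℕ) :
    ∃ f0 : Euc din → Euc dout,
      IsFNNExact (1 + din * (s + 1)) din dout (Dm dout (din * (s + 1)) * (din * 2 + 3)) f0 ∧
      ∀ x ∈ unitCube din, ∀ o, |fstar x o - f0 x o| ≤ 2 * K * din / (2 ^ s) := by
  classical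
  set N : ℕ := 2 ^ s with hN
  have hN0 : 0 < N := Nat.pow_pos (by norm_num)
  have hNR : (0:ℝ) < N := by exact_mod_cast hN0
  set P : ℕ := (N + 1) ^ din with hP
  have hP0 : 0 < P := Nat.pow_pos (by omega)
  set k : ℕ := din * (s + 1) with hk
  -- the grid
  have hcardfun : Fintype.card (Fin din → Fin (N + 1)) = P := by
    simp [Fintype.card_fun]; rfl
  let eP : (Fin din → Fin (N + 1)) ≃ Fin P := Fintype.equivFinOfCardEq hcardfun
  let p : Fin P → Euc din := fun q => WithLp.toLp 2 fun i => ((eP.symm q i : ℕ) : ℝ) / N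
  have hpcube : ∀ q, p q ∈ unitCube din := by
    intro q i
    constructor
    · positivity
    · rw [div_le_one hNR]
      exact_mod_cast Nat.le_of_lt_succ (eP.symm q i).isLt
  have hcov : ∀ x ∈ unitCube din, ∃ q : Fin P, ∀ i, |x i - p q i| ≤ 1 / N := by
    intro x hx
    have hq0 : ∀ i, ⌊x i * N⌋₊ < N + 1 := by
      intro i
      have h1 : x i ≤ 1 := (hx i).2
      have : x i * N ≤ N := by nlinarith
      have := Nat.floor_le_of_le this
      simpa using Nat.lt_succ_of_le (by simpa using this)
    refine ⟨eP (fun i => ⟨⌊x i * N⌋₊, hq0 i⟩), ?_⟩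
    intro i
    have hps : eP.symm (eP (fun i => (⟨⌊x i * N⌋₊, hq0 i⟩ : Fin (N+1)))) =
        fun i => (⟨⌊x i * N⌋₊, hq0 i⟩ : Fin (N+1)) := Equiv.symm_apply_apply _ _
    show |x i - ((eP.symm (eP _) i : ℕ) : ℝ) / N| ≤ 1 / N
    rw [hps]
    have h0 : (0:ℝ) ≤ x i * N := mul_nonneg (hx i).1 (le_of_lt hNR)
    have hfl : (⌊x i * N⌋₊ : ℝ) ≤ x i * N := Nat.floor_le h0
    have hfu : x i * N < (⌊x i * N⌋₊ : ℝ) + 1 := Nat.lt_floor_add_one _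
    have hdiv : ((⌊x i * N⌋₊ : ℝ)) / N * N = (⌊x i * N⌋₊ : ℝ) :=
      div_mul_cancel₀ _ (ne_of_gt hNR)
    have h1N : (1:ℝ)/N * N = 1 := div_mul_cancel₀ _ (ne_of_gt hNR)
    rw [abs_le]
    constructor
    · nlinarith
    · nlinarith
  -- leaves
  have hPle : P ≤ 2 ^ k := by
    have h1 : N + 1 ≤ 2 ^ (s + 1) := by
      have : 1 ≤ 2 ^ s := Nat.one_le_two_pow
      have h2 : 2 ^ (s + 1) = 2 ^ s + 2 ^ s := by rw [pow_succ]; omega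
      omega
    calc P = (N + 1) ^ din := rfl
      _ ≤ (2 ^ (s + 1)) ^ din := Nat.pow_le_pow_left h1 din
      _ = 2 ^ k := by rw [← pow_mul, hk, Nat.mul_comm]
  set D : ℕ := Dm dout k with hD
  let pt : Fin D → Euc din := fun j => p ⟨leafNum dout k j % P, Nat.mod_lt _ hP0⟩
  let cst : Fin D → ℝ := fun j => fstar (pt j) (leafGrp dout k j)
  refine ⟨fun x => gmax dout k (frontFun K pt cst x), ?_, ?_⟩
  · -- network membership
    have h1 : IsFNNExact 1 din D (D * (din * 2 + 3)) (frontFun K pt cst) :=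
      (frontNet K pt cst).mono (by nlinarith [Nat.zero_le D])
    have h2 : IsFNNExact k D dout (D * (din * 2 + 3)) (gmax dout k) :=
      (gmaxNet dout k).mono (by nlinarith [Nat.zero_le D])
    exact h1.comp h2
  · -- error bound
    intro x hx o
    have hKd : (0:ℝ) ≤ 2 * K * din / N := by positivity
    -- coordinatewise Lipschitz bound via the l1 distance
    have key : ∀ y ∈ unitCube din, ∀ oo : Fin dout,
        |fstar y oo - fstar x oo| ≤ K * ∑ i, |x i - y i| := by
      intro y hy oo
      have h1 : |fstar y oo - fstar x oo| ≤ ‖fstar y - fstar x‖ := by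
        have := euc_abs_coord_le (fstar y - fstar x) oo
        simpa [euc_sub_apply] using this
      have h2 : ‖fstar y - fstar x‖ ≤ K * ‖y - x‖ := hlip y hy x hx
      have h3 : ‖y - x‖ ≤ ∑ i, |x i - y i| := by
        refine le_trans (euc_norm_le_sum_abs _) (le_of_eq ?_)
        refine Finset.sum_congr rfl fun i _ => ?_
        rw [euc_sub_apply, abs_sub_comm]
      calc |fstar y oo - fstar x oo| ≤ K * ‖y - x‖ := le_trans h1 h2
        _ ≤ K * ∑ i, |x i - y i| := by
            exact mul_le_mul_of_nonneg_left h3 hK0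
    -- upper bound : f0 x o ≤ fstar x o
    have hub : gmax dout k (frontFun K pt cst x) o ≤ fstar x o := by
      obtain ⟨j, hjg, hjv⟩ := gmax_exists dout k (frontFun K pt cst x) o
      rw [hjv]
      have : frontFun K pt cst x j = cst j - K * ∑ i, |x i - pt j i| := rfl
      rw [this]
      have hc : cst j = fstar (pt j) o := by rw [show cst j = fstar (pt j) (leafGrp dout k j) from rfl, hjg]
      rw [hc]
      have := key (pt j) (hpcube _) o
      have habs := abs_le.1 this
      linarith [habs.2]
    -- lower bound
    have hlb : fstar x o - 2 * K * din / N ≤ gmax dout k (frontFun K pt cst x) o := by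
      obtain ⟨q, hq⟩ := hcov x hx
      have hqk : (q : ℕ) < 2 ^ k := lt_of_lt_of_le q.isLt hPle
      obtain ⟨j, hg, hn⟩ := leaf_exists dout k o (q : ℕ) hqk
      have hptj : pt j = p q := by
        show p _ = p q
        congr 1
        ext
        simp [hn, Nat.mod_eq_of_lt q.isLt]
      have hsum : ∑ i, |x i - pt j i| ≤ din * (1 / N) := by
        rw [hptj]
        calc ∑ i, |x i - p q i| ≤ ∑ _i : Fin din, (1:ℝ)/N :=
              Finset.sum_le_sum fun i _ => hq i
          _ = din * (1/N) := by simp [Finset.sum_const, nsmul_eq_mul]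
      have hval : gmax dout k (frontFun K pt cst x) o ≥ frontFun K pt cst x j := by
        have := gmax_ge dout k (frontFun K pt cst x) j
        rwa [hg] at this
      have hfr : frontFun K pt cst x j = fstar (pt j) o - K * ∑ i, |x i - pt j i| := by
        show cst j - _ = _
        rw [show cst j = fstar (pt j) (leafGrp dout k j) from rfl, hg]
      have hkey := key (pt j) (hpcube _) o
      have habs := abs_le.1 hkey
      have hKsum : K * ∑ i, |x i - pt j i| ≤ K * (din * (1/N)) :=
        mul_le_mul_of_nonneg_left hsum hK0
      have : fstar (pt j) o - K * ∑ i, |x i - pt j i| ≥ fstar x o - 2 * K * (din * (1/N)) := by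
        nlinarith [habs.1]
      rw [hfr] at hval
      have h1 : 2 * K * (din * (1/N)) = 2 * K * din / N := by ring
      linarith [h1 ▸ this]
    have hNs : ((N:ℕ):ℝ) = (2:ℝ) ^ s := by rw [hN]; push_cast; ring
    rw [abs_le, ← hNs]
    constructor <;> [linarith; linarith]
-- Part 7: clamp error
lemma clamp_err (aa bb t sv : ℝ) (hab : aa ≤ bb) (h1 : aa ≤ sv) (h2 : sv ≤ bb) :
    |sv - min (max t aa) bb| ≤ |sv - t| := by
  rcases le_total t aa with h | h
  · rw [max_eq_right h, min_eq_left hab, abs_of_nonneg (by linarith)]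
    rw [abs_of_nonneg (by linarith)]; linarith
  · rw [max_eq_left h]
    rcases le_total t bb with h' | h'
    · rw [min_eq_left h']
    · rw [min_eq_right h', abs_of_nonpos (by linarith), abs_of_nonpos (by linarith)]
      linarith

lemma Dm_eq (g k : ℕ) : Dm g k = g * 2 ^ k := by
  induction k with
  | zero => simp [Dm]
  | succ k ih => rw [show Dm g (k+1) = Dm g k + Dm g k from rfl, ih, pow_succ]; ring

lemma clog_cast_le (M : ℕ) (hM : 1 ≤ M) :
    (Nat.clog 2 M : ℝ) ≤ 1 + 2 * Real.log M := by
  rcases Nat.lt_or_ge M 2 with h | h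
  · interval_cases M
    simp [Nat.clog]
  · have hc1 : 1 ≤ Nat.clog 2 M := Nat.clog_pos (by norm_num) h
    have hlt : 2 ^ (Nat.clog 2 M - 1) < M := Nat.pow_pred_clog_lt_self (by norm_num) h
    have hltR : ((2:ℝ)) ^ (Nat.clog 2 M - 1) < (M : ℝ) := by exact_mod_cast hlt
    have hlog : ((Nat.clog 2 M - 1 : ℕ) : ℝ) * Real.log 2 ≤ Real.log M := by
      rw [← Real.log_pow]
      apply Real.log_le_log (by positivity) (le_of_lt hltR)
    have hl2 : (1:ℝ)/2 ≤ Real.log 2 := by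
      have := Real.log_two_gt_d9; linarith
    have hnn : (0:ℝ) ≤ ((Nat.clog 2 M - 1 : ℕ) : ℝ) := Nat.cast_nonneg _
    have h2 : ((Nat.clog 2 M - 1 : ℕ) : ℝ) ≤ 2 * Real.log M := by nlinarith
    have h3 : ((Nat.clog 2 M : ℕ) : ℝ) ≤ ((Nat.clog 2 M - 1 : ℕ) : ℝ) + 1 := by
      have : Nat.clog 2 M ≤ (Nat.clog 2 M - 1) + 1 := by omega
      exact_mod_cast this
    linarith

lemma pow_clog_le (M : ℕ) (hM : 1 ≤ M) : 2 ^ Nat.clog 2 M ≤ 2 * M := by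
  rcases Nat.lt_or_ge M 2 with h | h
  · interval_cases M; simp [Nat.clog]
  · have hc1 : 1 ≤ Nat.clog 2 M := Nat.clog_pos (by norm_num) h
    have hlt : 2 ^ (Nat.clog 2 M - 1) < M := Nat.pow_pred_clog_lt_self (by norm_num) h
    have : 2 ^ Nat.clog 2 M = 2 * 2 ^ (Nat.clog 2 M - 1) := by
      rw [← pow_succ']
      congr 1
      omega
    omega

/-- Let `f* : [0,1]^{d_in} → A` with finite 1-Hölder norm `K`, where
`A = ℝ^{d_out}` or `A` is a cube `∏_i [a_i, b_i]`.  Then there exist constants `c, C > 0`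
such that for every `M ≥ 1` there is `f_NN ∈ F_NN(d_in, d_out, L, W)` with
`L ≤ c(1 + log M)`, `W ≤ c·M`, sup-error on `[0,1]^{d_in}` at most `C·M^{−1/d_in}`, and the
range of `f_NN` contained in `A`. -/
theorem lipschitz_approx_vector (din dout : ℕ) (hdin : 0 < din)
    (A : Set (Euc dout))
    (hA : A = Set.univ ∨ ∃ a b : Fin dout → ℝ, (∀ i, a i ≤ b i) ∧
      A = {y : Euc dout | ∀ i, y i ∈ Icc (a i) (b i)})
    (fstar : Euc din → Euc dout) (K : ℝ)
    (hrange : ∀ x ∈ unitCube din, fstar x ∈ A)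
    (hbd : ∀ x ∈ unitCube din, ‖fstar x‖ ≤ K)
    (hlip : ∀ x ∈ unitCube din, ∀ y ∈ unitCube din, ‖fstar x - fstar y‖ ≤ K * ‖x - y‖) :
    ∃ c C : ℝ, 0 < c ∧ 0 < C ∧ ∀ M : ℕ, 1 ≤ M →
      ∃ (L W : ℕ) (f : Euc din → Euc dout),
        (L : ℝ) ≤ c * (1 + Real.log M) ∧ (W : ℝ) ≤ c * M ∧
        MemFNN din dout L W f ∧
        (∀ x ∈ unitCube din, ‖fstar x - f x‖ ≤ C * (M : ℝ) ^ (-(1 / (din : ℝ)))) ∧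
        (∀ x : Euc din, f x ∈ A) := by
  classical
  have h0cube : (0 : Euc din) ∈ unitCube din := by
    intro i
    show (0:ℝ) ∈ Icc (0:ℝ) 1
    exact ⟨le_refl 0, zero_le_one⟩
  have hK0 : 0 ≤ K := le_trans (norm_nonneg _) (hbd 0 h0cube)
  have hdinR : (0:ℝ) < din := by exact_mod_cast hdin
  set cL : ℝ := 2 * din + 6 with hcL
  set cWn : ℕ := dout * 4 ^ din * (din * 2 + 3) * 2 with hcWn
  set c : ℝ := cL + (cWn + 1) with hc
  set C : ℝ := 2 * K * din * dout + 1 with hC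
  have hnum : (0:ℝ) ≤ 2 * K * din * dout :=
    mul_nonneg (mul_nonneg (mul_nonneg (by norm_num) hK0) (Nat.cast_nonneg _)) (Nat.cast_nonneg _)
  refine ⟨c, C, by positivity, by rw [hC]; linarith, ?_⟩
  intro M hM
  have hMR1 : (1:ℝ) ≤ (M:ℝ) := by exact_mod_cast hM
  have hMpos : (0:ℝ) < M := by linarith
  have hlogM : 0 ≤ Real.log M := Real.log_nonneg hMR1
  set clog : ℕ := Nat.clog 2 M with hclog
  set s : ℕ := clog / din + 1 with hs
  set k : ℕ := din * (s + 1) with hk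
  obtain ⟨f0, hnet0, herr0⟩ := coreApprox din dout hdin fstar K hK0 hlip s
  set Lfull : ℕ := k + 3 with hLfull
  set Wfull : ℕ := Dm dout k * (din * 2 + 3) with hWfull
  -- nat facts about k and s
  have hdm : din * (clog / din) + clog % din = clog := Nat.div_add_mod clog din
  have hmlt : clog % din < din := Nat.mod_lt clog hdin
  have hk_le : k ≤ clog + 2 * din := by
    rw [hk, hs]
    have : din * (clog / din + 1 + 1) = din * (clog / din) + din + din := by ring
    rw [this]
    omega
  have hsdin : clog ≤ s * din := by
    rw [hs]
    have : (clog / din + 1) * din = din * (clog / din) + din := by ring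
    rw [this]
    omega
  -- depth bound
  have hclogR : (clog : ℝ) ≤ 1 + 2 * Real.log M := clog_cast_le M hM
  have hLR : (Lfull : ℝ) ≤ c * (1 + Real.log M) := by
    have h1 : (Lfull : ℝ) ≤ (clog : ℝ) + 2 * din + 3 := by
      have : Lfull ≤ clog + 2 * din + 3 := by omega
      calc (Lfull:ℝ) ≤ ((clog + 2*din + 3 : ℕ) : ℝ) := by exact_mod_cast this
        _ = (clog:ℝ) + 2*din + 3 := by push_cast; ring
    have h2 : (0:ℝ) ≤ ((cWn:ℝ) + 1) * (1 + Real.log M) := by positivity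
    have h3 : c * (1 + Real.log M) = cL * (1 + Real.log M) + ((cWn:ℝ)+1) * (1 + Real.log M) := by
      rw [hc]; ring
    have h4 : (clog:ℝ) + 2*din + 3 ≤ cL * (1 + Real.log M) := by
      rw [hcL]
      nlinarith
    linarith
  -- width bound
  have hpow2M : 2 ^ clog ≤ 2 * M := pow_clog_le M hM
  have hWnat : Wfull ≤ cWn * M := by
    rw [hWfull, Dm_eq, hcWn]
    have h1 : 2 ^ k ≤ 2 ^ (clog + 2 * din) := Nat.pow_le_pow_right (by norm_num) hk_le
    have h2 : 2 ^ (clog + 2 * din) = 2 ^ clog * 4 ^ din := by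
      rw [pow_add]
      congr 1
      rw [show 2 * din = din * 2 from by ring, pow_mul']
      norm_num
    have h3 : 2 ^ k ≤ 2 * M * 4 ^ din := by
      calc 2 ^ k ≤ 2 ^ clog * 4 ^ din := by rw [← h2]; exact h1
        _ ≤ 2 * M * 4 ^ din := Nat.mul_le_mul_right _ hpow2M
    calc dout * 2 ^ k * (din * 2 + 3) ≤ dout * (2 * M * 4 ^ din) * (din * 2 + 3) := by
          exact Nat.mul_le_mul_right _ (Nat.mul_le_mul_left _ h3)
      _ = dout * 4 ^ din * (din * 2 + 3) * 2 * M := by ring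
  have hWR : (Wfull : ℝ) ≤ c * M := by
    have h1 : (Wfull : ℝ) ≤ (cWn : ℝ) * M := by exact_mod_cast hWnat
    have h2 : (cWn:ℝ) * M ≤ c * M := by
      apply mul_le_mul_of_nonneg_right _ (le_of_lt hMpos)
      rw [hc, hcL]
      push_cast
      nlinarith [Nat.cast_nonneg (α := ℝ) cWn]
    linarith
  -- error bound
  have h2s_pos : (0:ℝ) < 2 ^ s := by positivity
  have hsd : M ≤ 2 ^ (s * din) := by
    calc M ≤ 2 ^ clog := Nat.le_pow_clog (by norm_num) M
      _ ≤ 2 ^ (s * din) := Nat.pow_le_pow_right (by norm_num) hsdin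
  have hpowR : (M:ℝ) ≤ ((2:ℝ) ^ s) ^ din := by
    have h1 : (M:ℝ) ≤ ((2 ^ (s * din) : ℕ) : ℝ) := by exact_mod_cast hsd
    calc (M:ℝ) ≤ ((2 ^ (s * din) : ℕ) : ℝ) := h1
      _ = (2:ℝ) ^ (s * din) := by push_cast; ring
      _ = ((2:ℝ) ^ s) ^ din := by rw [pow_mul]
  have hroot : (M:ℝ) ^ ((1:ℝ)/din) ≤ (2:ℝ) ^ s := by
    have h1 : ((M:ℝ)) ^ ((1:ℝ)/din) ≤ (((2:ℝ) ^ s) ^ (din:ℕ)) ^ ((1:ℝ)/din) :=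
      Real.rpow_le_rpow (le_of_lt hMpos) hpowR (by positivity)
    have h2 : (((2:ℝ) ^ s) ^ (din:ℕ)) ^ ((1:ℝ)/din) = (2:ℝ) ^ s := by
      rw [← Real.rpow_natCast ((2:ℝ) ^ s) din, ← Real.rpow_mul (le_of_lt h2s_pos)]
      rw [mul_one_div, div_self (ne_of_gt hdinR), Real.rpow_one]
    rw [h2] at h1
    exact h1
  have hrp_pos : (0:ℝ) < (M:ℝ) ^ ((1:ℝ)/din) := Real.rpow_pos_of_pos hMpos _
  have herrR : (dout:ℝ) * (2 * K * din / 2 ^ s) ≤ C * (M:ℝ) ^ (-(1/(din:ℝ))) := by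
    have h0 : (dout:ℝ) * (2 * K * din / 2 ^ s) = (2 * K * din * dout) / 2 ^ s := by ring
    have h5 : (2 * K * din * dout : ℝ) / 2 ^ s ≤ (2 * K * din * dout) / (M:ℝ) ^ ((1:ℝ)/din) := by
      gcongr
    have h6 : (2 * K * din * dout : ℝ) / (M:ℝ) ^ ((1:ℝ)/din)
        = (2 * K * din * dout) * (M:ℝ) ^ (-(1/(din:ℝ))) := by
      rw [Real.rpow_neg (le_of_lt hMpos), div_eq_mul_inv]
    have h7 : (0:ℝ) ≤ (M:ℝ) ^ (-(1/(din:ℝ))) := Real.rpow_nonneg (le_of_lt hMpos) _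
    have h8 : (2 * K * din * dout : ℝ) * (M:ℝ) ^ (-(1/(din:ℝ))) ≤ C * (M:ℝ) ^ (-(1/(din:ℝ))) := by
      apply mul_le_mul_of_nonneg_right _ h7
      rw [hC]; linarith
    linarith [h0.le, h0.ge]
  -- the vector error for the unclamped net
  have hvec : ∀ (f1 : Euc din → Euc dout),
      (∀ x ∈ unitCube din, ∀ o, |fstar x o - f1 x o| ≤ 2 * K * din / 2 ^ s) →
      ∀ x ∈ unitCube din, ‖fstar x - f1 x‖ ≤ C * (M:ℝ) ^ (-(1/(din:ℝ))) := by
    intro f1 hco x hx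
    have h1 : ‖fstar x - f1 x‖ ≤ (dout:ℝ) * (2 * K * din / 2 ^ s) := by
      apply euc_norm_le_card_mul
      intro o
      rw [euc_sub_apply]
      exact hco x hx o
    linarith
  have hLW : MemFNN din dout Lfull Wfull f0 := ⟨1 + k, by omega, hnet0⟩
  rcases hA with hAu | ⟨a, b, hab, hAc⟩
  · exact ⟨Lfull, Wfull, f0, hLR, hWR, hLW, hvec f0 herr0, fun x => by rw [hAu]; trivial⟩
  · -- clamped network
    set f : Euc din → Euc dout := clampHighFun b ∘ clampLowFun a ∘ f0 with hf
    have hdoutW : dout ≤ Wfull := by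
      rw [hWfull, Dm_eq]
      have h1 : 1 ≤ 2 ^ k := Nat.one_le_two_pow
      calc dout = dout * 1 * 1 := by ring
        _ ≤ dout * 2 ^ k * (din * 2 + 3) := by
            exact Nat.mul_le_mul (Nat.mul_le_mul_left _ h1) (by omega)
    have hnetc : IsFNNExact (1 + k + 1 + 1) din dout Wfull f := by
      have hcl : IsFNNExact 1 dout dout Wfull (clampLowFun a) := (clampLowNet a).mono hdoutW
      have hch : IsFNNExact 1 dout dout Wfull (clampHighFun b) := (clampHighNet b).mono hdoutW
      have h1 := hnet0.comp hcl
      have h2 := h1.comp hch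
      exact h2
    have hmem : MemFNN din dout Lfull Wfull f := ⟨1 + k + 1 + 1, by omega, hnetc⟩
    have hcoerr : ∀ x ∈ unitCube din, ∀ o, |fstar x o - f x o| ≤ 2 * K * din / 2 ^ s := by
      intro x hx o
      have hfx : f x o = min (max (f0 x o) (a o)) (b o) := rfl
      have hio : fstar x o ∈ Icc (a o) (b o) := by
        have := hrange x hx
        rw [hAc] at this
        exact this o
      rw [hfx]
      exact le_trans (clamp_err (a o) (b o) (f0 x o) (fstar x o) (hab o) hio.1 hio.2)
        (herr0 x hx o)
    refine ⟨Lfull, Wfull, f, hLR, hWR, hmem, hvec f hcoerr, ?_⟩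
    intro x
    rw [hAc]
    intro o
    constructor
    · exact le_min (le_trans (le_refl _) (le_max_right (f0 x o) (a o))) (hab o)
    · exact min_le_right _ _

end
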